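/- arXiv:1206.6269 — 4 statements merged into one kernel-verified Lean document; each statement's English description precedes it below -/
import Mathlib

section
/- For N ≥ 2, the unit vector φ₁ ∈ C^N with coordinates ((N−1)a, −a, ..., −a) where a = (N(N−1))^{-1/2} satisfies Σⱼ aⱼ = 0, has unit norm, and its output entropy under the diagonal map equals log N − (1 − 2/N) log(N−1). -/
/-- For N ≥ 2, the unit vector φ₁ ∈ ℝ^N with coordinates ((N−1)a, −a, ..., −a),
a = (N(N−1))^{-1/2}, satisfies Σ aⱼ = 0, has unit norm, and its diagonal-map output
entropy equals log N − (1 − 2/N)·log(N−1). -/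
theorem stmt1 (N : ℕ) (hN : 2 ≤ N) (a : ℝ)
    (ha : a = (Real.sqrt ((N : ℝ) * ((N : ℝ) - 1)))⁻¹)
    (φ : Fin N → ℝ)
    (hφ : ∀ j : Fin N, φ j = if (j : ℕ) = 0 then ((N : ℝ) - 1) * a else -a) :
    (∑ j, φ j = 0) ∧
    (∑ j, (φ j) ^ 2 = 1) ∧
    (∑ j, Real.negMulLog ((φ j) ^ 2)
      = Real.log N - (1 - 2 / (N : ℝ)) * Real.log ((N : ℝ) - 1)) := by
  obtain ⟨M, rfl⟩ : ∃ M, N = M + 1 := ⟨N - 1, by omega⟩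
  set n : ℝ := ((M + 1 : ℕ) : ℝ) with hn
  have hn2 : (2 : ℝ) ≤ n := by rw [hn]; exact_mod_cast hN
  have hn0 : (0 : ℝ) < n := by linarith
  have hn1 : (0 : ℝ) < n - 1 := by linarith
  have hnn : (0 : ℝ) < n * (n - 1) := by positivity
  have hsum : ∀ A B : ℝ, (∑ j : Fin (M + 1),
      (if (j : ℕ) = 0 then A else B)) = A + (n - 1) * B := by
    intro A B
    rw [Fin.sum_univ_succ]
    simp only [Fin.val_zero, if_pos rfl, Fin.val_succ, Nat.succ_ne_zero, if_false]
    simp [Finset.sum_const, hn]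
  have ha2 : a ^ 2 = (n * (n - 1))⁻¹ := by
    rw [ha, inv_pow, Real.sq_sqrt (le_of_lt hnn)]
  refine ⟨?_, ?_, ?_⟩
  · have := hsum ((n - 1) * a) (-a)
    calc ∑ j, φ j = ∑ j : Fin (M + 1), (if (j : ℕ) = 0 then (n - 1) * a else -a) := by
          exact Finset.sum_congr rfl fun j _ => hφ j
      _ = 0 := by rw [hsum]; ring
  · calc ∑ j, (φ j) ^ 2
        = ∑ j : Fin (M + 1), (if (j : ℕ) = 0 then (((n - 1) * a) ^ 2) else ((-a) ^ 2)) := by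
          refine Finset.sum_congr rfl fun j _ => ?_
          rw [hφ j]; split <;> rfl
      _ = ((n - 1) * a) ^ 2 + (n - 1) * (-a) ^ 2 := hsum _ _
      _ = 1 := by
          have : (-a) ^ 2 = a ^ 2 := by ring
          rw [this, mul_pow, ha2]
          field_simp
          ring
  · have h1 : ((n - 1) * a) ^ 2 = (n - 1) / n := by
      rw [mul_pow, ha2]
      field_simp
    have h2 : (-a) ^ 2 = (n * (n - 1))⁻¹ := by rw [neg_pow]; simp [ha2]
    calc ∑ j, Real.negMulLog ((φ j) ^ 2)
        = ∑ j : Fin (M + 1), (if (j : ℕ) = 0 then Real.negMulLog (((n - 1) * a) ^ 2)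
            else Real.negMulLog ((-a) ^ 2)) := by
          refine Finset.sum_congr rfl fun j _ => ?_
          rw [hφ j]; split <;> rfl
      _ = Real.negMulLog (((n - 1) * a) ^ 2) + (n - 1) * Real.negMulLog ((-a) ^ 2) :=
          hsum _ _
      _ = Real.log n - (1 - 2 / n) * Real.log (n - 1) := by
          rw [h1, h2, Real.negMulLog, Real.negMulLog, Real.log_inv,
            Real.log_mul (ne_of_gt hn0) (ne_of_gt hn1),
            Real.log_div (ne_of_gt hn1) (ne_of_gt hn0)]
          field_simp
          ring
end

section
/- For integers N with 2 ≤ N ≤ 6, one has log 2 ≤ log N − (1 − 2/N) log(N−1), while for every integer N > 6 the reverse strict inequality log N − (1 − 2/N) log(N−1) < log 2 holds. -/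
lemma log3_lt' : Real.log 3 < 9/8 := by
  have h : (3:ℝ)^8 < (Real.exp 1)^9 := by
    calc (3:ℝ)^8 < 2.7182818283^9 := by norm_num
    _ ≤ (Real.exp 1)^9 := by
        gcongr
        have := Real.exp_one_gt_d9; norm_num at this ⊢; linarith
  have h2 : Real.log ((3:ℝ)^8) < Real.log ((Real.exp 1)^9) :=
    Real.log_lt_log (by positivity) h
  rw [Real.log_pow, Real.log_pow, Real.log_exp] at h2
  push_cast at h2
  linarith

lemma log3_gt' : (1:ℝ) < Real.log 3 := by
  rw [show (1:ℝ) = Real.log (Real.exp 1) by rw [Real.log_exp]]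
  apply Real.log_lt_log (Real.exp_pos 1)
  have := Real.exp_one_lt_d9
  norm_num at this ⊢
  linarith

lemma log6_eq : Real.log 6 = Real.log 2 + Real.log 3 := by
  rw [show (6:ℝ) = 2 * 3 by norm_num, Real.log_mul (by norm_num) (by norm_num)]

lemma log_sub_le (x : ℝ) (hx : 2 ≤ x) : Real.log x - Real.log (x-1) ≤ 1/(x-1) := by
  have hx1 : (0:ℝ) < x - 1 := by linarith
  have h := Real.log_le_sub_one_of_pos (show (0:ℝ) < x/(x-1) by positivity)
  rw [Real.log_div (by linarith) (by linarith)] at h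
  have : x / (x-1) - 1 = 1/(x-1) := by field_simp; ring
  linarith

lemma aux_dec : ∀ n : ℕ, 7 ≤ n → Real.log ((n:ℝ)-1) / n ≤ Real.log 6 / 7 := by
  intro n hn
  induction n, hn using Nat.le_induction with
  | base => norm_num
  | succ n hn ih =>
    have hn7 : (7:ℝ) ≤ (n:ℝ) := by exact_mod_cast hn
    have hn1 : (0:ℝ) < (n:ℝ) - 1 := by linarith
    have hlog6 : (7:ℝ)/6 ≤ Real.log 6 := by
      have := Real.log_two_gt_d9
      rw [log6_eq]; nlinarith [log3_gt']
    have hmono : Real.log 6 ≤ Real.log ((n:ℝ)-1) :=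
      Real.log_le_log (by norm_num) (by linarith)
    have hstep : Real.log (n:ℝ) * (n:ℝ) ≤ ((n:ℝ)+1) * Real.log ((n:ℝ)-1) := by
      have h1 : Real.log (n:ℝ) - Real.log ((n:ℝ)-1) ≤ 1/((n:ℝ)-1) :=
        log_sub_le _ (by linarith)
      have h2 : (n:ℝ)/((n:ℝ)-1) ≤ 7/6 := by
        rw [div_le_div_iff₀ hn1 (by norm_num)]; linarith
      have h3 : (n:ℝ) * (1/((n:ℝ)-1)) = (n:ℝ)/((n:ℝ)-1) := by ring
      nlinarith
    have key : Real.log (n:ℝ) / ((n:ℝ)+1) ≤ Real.log ((n:ℝ)-1) / (n:ℝ) := by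
      rw [div_le_div_iff₀ (by linarith) (by linarith)]
      linarith
    calc Real.log ((↑(n+1):ℝ)-1) / (↑(n+1):ℝ) = Real.log (n:ℝ) / ((n:ℝ)+1) := by
          push_cast; ring_nf
    _ ≤ Real.log ((n:ℝ)-1) / (n:ℝ) := key
    _ ≤ Real.log 6 / 7 := ih

/-- For 2 ≤ N ≤ 6, log 2 ≤ log N − (1 − 2/N) log(N−1); for N > 6 the strict reverse
inequality holds. -/
theorem stmt2 (N : ℕ) :
    (2 ≤ N → N ≤ 6 →
      Real.log 2 ≤ Real.log N - (1 - 2 / (N : ℝ)) * Real.log ((N : ℝ) - 1)) ∧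
    (6 < N →
      Real.log N - (1 - 2 / (N : ℝ)) * Real.log ((N : ℝ) - 1) < Real.log 2) := by
  constructor
  · intro h2 h6
    interval_cases N
    · norm_num
    · -- N = 3 : 4 log 2 ≤ 3 log 3
      have h := Real.log_le_log (show (0:ℝ) < 2^4 by norm_num)
        (show (2:ℝ)^4 ≤ 3^3 by norm_num)
      rw [Real.log_pow, Real.log_pow] at h
      push_cast at h ⊢
      nlinarith
    · -- N = 4 : log 3 ≤ 2 log 2, log 4 = 2 log 2
      have h := Real.log_le_log (show (0:ℝ) < 3 by norm_num)
        (show (3:ℝ) ≤ 2^2 by norm_num)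
      rw [Real.log_pow] at h
      have h4 : Real.log 4 = 2 * Real.log 2 := by
        rw [show (4:ℝ) = 2^2 by norm_num, Real.log_pow]; push_cast; ring
      push_cast at h ⊢
      nlinarith
    · -- N = 5 : 11 log 2 ≤ 5 log 5, log 4 = 2 log 2
      have h := Real.log_le_log (show (0:ℝ) < 2^11 by norm_num)
        (show (2:ℝ)^11 ≤ 5^5 by norm_num)
      rw [Real.log_pow, Real.log_pow] at h
      have h4 : Real.log 4 = 2 * Real.log 2 := by
        rw [show (4:ℝ) = 2^2 by norm_num, Real.log_pow]; push_cast; ring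
      push_cast at h ⊢
      nlinarith
    · -- N = 6 : 3 log 2 + 2 log 5 ≤ 3 log 6
      have h := Real.log_le_log (show (0:ℝ) < 2^3 * 5^2 by norm_num)
        (show (2:ℝ)^3 * 5^2 ≤ 6^3 by norm_num)
      rw [Real.log_mul (by norm_num) (by norm_num), Real.log_pow, Real.log_pow,
        Real.log_pow] at h
      push_cast at h ⊢
      nlinarith
  · intro h6
    have h7 : 7 ≤ N := h6
    have hx : (7:ℝ) ≤ (N:ℝ) := by exact_mod_cast h7
    have hN0 : (0:ℝ) < (N:ℝ) := by linarith
    have h1 : Real.log (N:ℝ) - Real.log ((N:ℝ)-1) ≤ 1/6 := by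
      have := log_sub_le (N:ℝ) (by linarith)
      have h16 : 1/((N:ℝ)-1) ≤ 1/6 := by
        rw [div_le_div_iff₀ (by linarith) (by norm_num)]; linarith
      linarith
    have h2 : Real.log ((N:ℝ)-1) / (N:ℝ) ≤ Real.log 6 / 7 := aux_dec N h7
    have hexpand : Real.log (N:ℝ) - (1 - 2 / (N:ℝ)) * Real.log ((N:ℝ) - 1)
        = (Real.log (N:ℝ) - Real.log ((N:ℝ)-1)) + 2 * (Real.log ((N:ℝ)-1) / (N:ℝ)) := by
      field_simp
      ring
    rw [hexpand]
    have hl2 := Real.log_two_gt_d9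
    have hl3 := log3_lt'
    have h6eq := log6_eq
    have hl2' := Real.log_two_lt_d9
    norm_num at hl2 hl2'
    nlinarith
end

section
/- Let Ω be a compact convex set, P : Ω → Ω an affine idempotent map (P∘P = P), and f : Ω → ℝ a continuous function with f(Pω) = f(ω) for all ω. Define the convex roof f^∪(ω) = inf{Σ pᵢ f(ωᵢ) : ω = Σ pᵢ ωᵢ convex combination}. Then for every P-invariant point ω (i.e., Pω = ω), the infimum f^∪(ω) can be computed using only decompositions into P-invariant points; moreover f^∪(ω) ≥ f^∪(Pω) for every ω ∈ Ω. -/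
lemma stmt7_aux {V : Type*} [NormedAddCommGroup V] [NormedSpace ℝ V]
    (P : V →ᵃ[ℝ] V) {k : ℕ} (p : Fin k → ℝ) (x : Fin k → V)
    (hp : ∑ i, p i = 1) : ∑ i, p i • P (x i) = P (∑ i, p i • x i) := by
  have hdec : ∀ y : V, P y = P.linear y + P 0 := by
    intro y
    conv_lhs => rw [show ⇑P = ⇑P.linear + Function.const V (P 0) from AffineMap.decomp P]
    simp [Function.const]
  calc ∑ i, p i • P (x i) = ∑ i, (p i • P.linear (x i) + p i • P 0) := by
        exact Finset.sum_congr rfl fun i _ => by rw [hdec (x i), smul_add]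
    _ = P.linear (∑ i, p i • x i) + (∑ i, p i) • P 0 := by
        rw [Finset.sum_add_distrib, map_sum, Finset.sum_smul]
        simp [map_smul]
    _ = P (∑ i, p i • x i) := by rw [hp, one_smul, ← hdec]

/-- Theorem 2 of the paper: for an affine idempotent P : Ω → Ω and a continuous
P-invariant f, the convex roof of f at a P-invariant point can be computed using
decompositions into P-invariant points only, and f^∪(ω) ≥ f^∪(Pω) for all ω. -/
theorem stmt7
    {V : Type*} [NormedAddCommGroup V] [NormedSpace ℝ V] [FiniteDimensional ℝ V]
    (Ω : Set V) (hΩc : IsCompact Ω) (hΩ : Convex ℝ Ω)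
    (P : V →ᵃ[ℝ] V) (hPΩ : Set.MapsTo P Ω Ω)
    (hP2 : ∀ ω ∈ Ω, P (P ω) = P ω)
    (f : V → ℝ) (hf : ContinuousOn f Ω)
    (hfP : ∀ ω ∈ Ω, f (P ω) = f ω)
    (roof roofInv : V → ℝ)
    (hroof : ∀ ω, roof ω =
      sInf {s : ℝ | ∃ (k : ℕ) (p : Fin k → ℝ) (ωi : Fin k → V),
        (∀ i, 0 < p i) ∧ (∑ i, p i = 1) ∧ (∀ i, ωi i ∈ Ω) ∧
        (∑ i, p i • ωi i = ω) ∧ s = ∑ i, p i * f (ωi i)})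
    (hroofInv : ∀ ω, roofInv ω =
      sInf {s : ℝ | ∃ (k : ℕ) (p : Fin k → ℝ) (ωi : Fin k → V),
        (∀ i, 0 < p i) ∧ (∑ i, p i = 1) ∧ (∀ i, ωi i ∈ Ω) ∧ (∀ i, P (ωi i) = ωi i) ∧
        (∑ i, p i • ωi i = ω) ∧ s = ∑ i, p i * f (ωi i)}) :
    (∀ ω ∈ Ω, P ω = ω → roof ω = roofInv ω) ∧
    (∀ ω ∈ Ω, roof (P ω) ≤ roof ω) := by
  set S : V → Set ℝ := fun ω => {s : ℝ | ∃ (k : ℕ) (p : Fin k → ℝ) (ωi : Fin k → V),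
        (∀ i, 0 < p i) ∧ (∑ i, p i = 1) ∧ (∀ i, ωi i ∈ Ω) ∧
        (∑ i, p i • ωi i = ω) ∧ s = ∑ i, p i * f (ωi i)} with hS
  set T : V → Set ℝ := fun ω => {s : ℝ | ∃ (k : ℕ) (p : Fin k → ℝ) (ωi : Fin k → V),
        (∀ i, 0 < p i) ∧ (∑ i, p i = 1) ∧ (∀ i, ωi i ∈ Ω) ∧ (∀ i, P (ωi i) = ωi i) ∧
        (∑ i, p i • ωi i = ω) ∧ s = ∑ i, p i * f (ωi i)} with hT
  -- from a decomposition of ω we get an invariant decomposition of P ω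
  have key : ∀ ω, S ω ⊆ T (P ω) := by
    rintro ω s ⟨k, p, x, hpos, hsum, hmem, hcomb, hval⟩
    refine ⟨k, p, fun i => P (x i), hpos, hsum, fun i => hPΩ (hmem i),
      fun i => hP2 _ (hmem i), ?_, ?_⟩
    · rw [stmt7_aux P p x hsum, hcomb]
    · rw [hval]
      exact Finset.sum_congr rfl fun i _ => by rw [hfP _ (hmem i)]
  have TS : ∀ ω, T ω ⊆ S ω := by
    rintro ω s ⟨k, p, x, hpos, hsum, hmem, _, hcomb, hval⟩
    exact ⟨k, p, x, hpos, hsum, hmem, hcomb, hval⟩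
  have bdd : ∀ ω ∈ Ω, BddBelow (S ω) := by
    intro ω hω
    obtain ⟨m, hm, hmin⟩ := hΩc.exists_isMinOn ⟨ω, hω⟩ hf
    refine ⟨f m, ?_⟩
    rintro s ⟨k, p, x, hpos, hsum, hmem, hcomb, hval⟩
    rw [hval]
    calc f m = ∑ i, p i * f m := by rw [← Finset.sum_mul, hsum, one_mul]
      _ ≤ ∑ i, p i * f (x i) :=
        Finset.sum_le_sum fun i _ => mul_le_mul_of_nonneg_left (hmin (hmem i)) (hpos i).le
  have ne : ∀ ω ∈ Ω, (S ω).Nonempty := by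
    intro ω hω
    exact ⟨f ω, 1, fun _ => (1:ℝ), fun _ => ω, fun _ => one_pos, by simp, fun _ => hω,
      by simp, by simp⟩
  constructor
  · intro ω hω hfix
    have hST : S ω = T ω := by
      apply Set.Subset.antisymm
      · have := key ω; rwa [hfix] at this
      · exact TS ω
    rw [hroof, hroofInv]
    exact congrArg sInf hST
  · intro ω hω
    rw [hroof, hroof]
    exact csInf_le_csInf (bdd _ (hPΩ hω)) (ne ω hω)
      (fun s hs => TS _ (key ω hs))
end

section
/- If f : Ω → ℝ is concave on a compact convex set Ω, then for every ω ∈ Ω and every convex decomposition ω = Σ pᵢ ωᵢ, there exists a convex decomposition of ω into extreme points of Ω whose corresponding weighted sum of f-values is at most Σ pᵢ f(ωᵢ). Consequently the convex roof infimum taken over decompositions into extreme points equals the infimum over all decompositions. -/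
open Set

universe u

/-- Statement of Minkowski's theorem at dimension bound `n`. -/
def MinkStmt (n : ℕ) : Prop :=
  ∀ (V : Type u) [NormedAddCommGroup V] [NormedSpace ℝ V] [FiniteDimensional ℝ V],
    Module.finrank ℝ V ≤ n → ∀ s : Set V, IsCompact s → Convex ℝ s →
      s ⊆ convexHull ℝ (Set.extremePoints ℝ s)

lemma mink_transfer {V : Type u} [NormedAddCommGroup V] [NormedSpace ℝ V]
    [FiniteDimensional ℝ V] {n : ℕ} (H : MinkStmt.{u} n)
    (W : Submodule ℝ V) (hW : Module.finrank ℝ W ≤ n) (p : V) (s : Set V)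
    (hcomp : IsCompact s) (hconv : Convex ℝ s) (hsub : ∀ w ∈ s, w - p ∈ W) :
    s ⊆ convexHull ℝ (Set.extremePoints ℝ s) := by
  classical
  -- the affine embedding of W into V
  set ψ : W →ᵃ[ℝ] V :=
    { toFun := fun w => (w : V) + p
      linear := W.subtype
      map_vadd' := by
        intro p' v
        show ((v + p' : W) : V) + p = (v : V) + ((p' : V) + p)
        push_cast
        abel }
  have hψ : ∀ w : W, ψ w = (w : V) + p := fun _ => rfl
  set s' : Set W := {w : W | (w : V) + p ∈ s} with hs'
  have hmem' : ∀ (x : V) (hx : x ∈ s), (⟨x - p, hsub x hx⟩ : W) ∈ s' := by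
    intro x hx
    simp only [hs', Set.mem_setOf_eq, sub_add_cancel]
    exact hx
  -- s' is compact
  have hcl : IsClosed s' := by
    have : Continuous fun w : W => (w : V) + p := (continuous_subtype_val).add continuous_const
    exact IsClosed.preimage this hcomp.isClosed
  have hbd : Bornology.IsBounded s' := by
    obtain ⟨C, hC⟩ := isBounded_iff_forall_norm_le.1 hcomp.isBounded
    refine isBounded_iff_forall_norm_le.2 ⟨C + ‖p‖, ?_⟩
    intro w hw
    have h1 : ‖(w : V) + p‖ ≤ C := hC _ hw
    have : ‖(w : V)‖ ≤ ‖(w : V) + p‖ + ‖p‖ := by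
      calc ‖(w : V)‖ = ‖((w : V) + p) - p‖ := by rw [add_sub_cancel_right]
        _ ≤ ‖(w : V) + p‖ + ‖p‖ := norm_sub_le _ _
    calc ‖w‖ = ‖(w : V)‖ := rfl
      _ ≤ ‖(w : V) + p‖ + ‖p‖ := this
      _ ≤ C + ‖p‖ := by linarith
  have hcomp' : IsCompact s' := Metric.isCompact_of_isClosed_isBounded hcl hbd
  -- s' is convex
  have hkey : ∀ (a b : ℝ), a + b = 1 → ∀ x y : V,
      a • (x + p) + b • (y + p) = (a • x + b • y) + p := by
    intro a b hab x y
    rw [smul_add, smul_add]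
    have : a • p + b • p = p := by rw [← add_smul, hab, one_smul]
    calc a • x + a • p + (b • y + b • p) = (a • x + b • y) + (a • p + b • p) := by abel
      _ = (a • x + b • y) + p := by rw [this]
  have hconv' : Convex ℝ s' := by
    intro w₁ hw₁ w₂ hw₂ a b ha hb hab
    show ((a • w₁ + b • w₂ : W) : V) + p ∈ s
    have heq : ((a • w₁ + b • w₂ : W) : V) + p = a • ((w₁ : V) + p) + b • ((w₂ : V) + p) := by
      rw [hkey a b hab]
      push_cast
      rfl
    rw [heq]
    exact hconv hw₁ hw₂ ha hb hab
  -- apply the hypothesis in W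
  have hsub' : s' ⊆ convexHull ℝ (Set.extremePoints ℝ s') := H W hW s' hcomp' hconv'
  -- extreme points transfer forward
  have hext : ψ '' Set.extremePoints ℝ s' ⊆ Set.extremePoints ℝ s := by
    rintro _ ⟨w, hw, rfl⟩
    rw [mem_extremePoints] at hw ⊢
    refine ⟨hw.1, ?_⟩
    intro x₁ hx₁ x₂ hx₂ hseg
    obtain ⟨a, b, ha, hb, hab, habx⟩ := hseg
    set w₁ : W := ⟨x₁ - p, hsub x₁ hx₁⟩
    set w₂ : W := ⟨x₂ - p, hsub x₂ hx₂⟩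
    have hw₁ : w₁ ∈ s' := hmem' x₁ hx₁
    have hw₂ : w₂ ∈ s' := hmem' x₂ hx₂
    have hcoe : ((a • w₁ + b • w₂ : W) : V) = (w : V) := by
      push_cast
      have : a • (x₁ - p) + b • (x₂ - p) = (a • x₁ + b • x₂) - (a • p + b • p) := by
        rw [smul_sub, smul_sub]; abel
      rw [this, habx]
      have hp : a • p + b • p = p := by rw [← add_smul, hab, one_smul]
      rw [hp, hψ]
      abel
    have hwseg : w ∈ openSegment ℝ w₁ w₂ :=
      ⟨a, b, ha, hb, hab, Subtype.ext hcoe⟩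
    obtain ⟨h1, h2⟩ := hw.2 w₁ hw₁ w₂ hw₂ hwseg
    constructor
    · have := congrArg (fun u : W => (u : V) + p) h1
      exact (sub_add_cancel x₁ p).symm.trans this
    · have := congrArg (fun u : W => (u : V) + p) h2
      exact (sub_add_cancel x₂ p).symm.trans this
  -- conclude
  intro x hx
  have hw : (⟨x - p, hsub x hx⟩ : W) ∈ convexHull ℝ (Set.extremePoints ℝ s') :=
    hsub' (hmem' x hx)
  have himg : ψ '' convexHull ℝ (Set.extremePoints ℝ s')
      = convexHull ℝ (ψ '' Set.extremePoints ℝ s') :=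
    ψ.image_convexHull _
  have hx' : x ∈ ψ '' convexHull ℝ (Set.extremePoints ℝ s') :=
    ⟨_, hw, by rw [hψ]; exact sub_add_cancel x p⟩
  rw [himg] at hx'
  exact convexHull_mono hext hx'

lemma mink_endpoint {V : Type u} [NormedAddCommGroup V] [NormedSpace ℝ V]
    [FiniteDimensional ℝ V] {n : ℕ} (H : MinkStmt.{u} n)
    (s : Set V) (hcomp : IsCompact s) (hconv : Convex ℝ s)
    (hrank : Module.finrank ℝ V ≤ n + 1) (hspan : affineSpan ℝ s = ⊤)
    {y v : V} (hy : y ∈ s) (hv : v ≠ 0) (hout : ∀ ε : ℝ, 0 < ε → y + ε • v ∉ s) :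
    y ∈ convexHull ℝ (Set.extremePoints ℝ s) := by
  classical
  obtain ⟨w₀, hw₀⟩ : (interior s).Nonempty :=
    hconv.interior_nonempty_iff_affineSpan_eq_top.2 hspan
  -- y is not interior
  have hyint : y ∉ interior s := by
    intro hyi
    obtain ⟨ε, hε, hball⟩ := Metric.mem_nhds_iff.1 (isOpen_interior.mem_nhds hyi)
    set t : ℝ := ε / (2 * (‖v‖ + 1)) with ht
    have htpos : 0 < t := by positivity
    have : y + t • v ∈ Metric.ball y ε := by
      rw [Metric.mem_ball, dist_eq_norm, add_sub_cancel_left, norm_smul,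
        Real.norm_eq_abs, abs_of_pos htpos]
      have h1 : ‖v‖ < ‖v‖ + 1 := by linarith
      have h2 : t * (‖v‖ + 1) = ε / 2 := by
        rw [ht]
        field_simp
      calc t * ‖v‖ < t * (‖v‖ + 1) := mul_lt_mul_of_pos_left h1 htpos
        _ = ε / 2 := h2
        _ < ε := by linarith
    exact hout t htpos (interior_subset (hball this))
  -- supporting functional
  obtain ⟨l, hl⟩ := geometric_hahn_banach_open_point hconv.interior isOpen_interior hyint
  have hle : ∀ w ∈ s, l w ≤ l y := by
    intro w hw
    have hIoc : ∀ t : ℝ, t ∈ Set.Ioc (0 : ℝ) 1 → l (w + t • (w₀ - w)) < l y := by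
      intro t ht
      refine hl _ (hconv.add_smul_mem_interior hw ?_ ht)
      rwa [add_sub_cancel]
    haveI : (nhdsWithin (0:ℝ) (Set.Ioc 0 1)).NeBot := by
      refine mem_closure_iff_nhdsWithin_neBot.1 ?_
      rw [closure_Ioc (by norm_num : (0:ℝ) ≠ 1)]
      exact ⟨le_refl 0, by norm_num⟩
    have hcont : Filter.Tendsto (fun t : ℝ => l (w + t • (w₀ - w)))
        (nhdsWithin 0 (Set.Ioc 0 1)) (nhds (l w)) := by
      have : Continuous fun t : ℝ => l (w + t • (w₀ - w)) :=
        l.continuous.comp (continuous_const.add (continuous_id.smul continuous_const))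
      have h0 : (fun t : ℝ => l (w + t • (w₀ - w))) 0 = l w := by simp
      exact h0 ▸ (this.tendsto 0).mono_left nhdsWithin_le_nhds
    exact le_of_tendsto hcont
      (Filter.eventually_of_mem self_mem_nhdsWithin fun t ht => (hIoc t ht).le)
  have hlt : l w₀ < l y := hl w₀ hw₀
  -- the exposed face
  set F : Set V := {w ∈ s | l w = l y} with hF
  have hyF : y ∈ F := ⟨hy, rfl⟩
  have hexp : IsExposed ℝ s F := by
    intro _
    refine ⟨l, ?_⟩
    ext w
    constructor
    · rintro ⟨hws, heq⟩
      exact ⟨hws, fun z hz => heq ▸ hle z hz⟩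
    · rintro ⟨hws, hmax⟩
      exact ⟨hws, le_antisymm (hle w hws) (hmax y hy)⟩
  have hFs : F ⊆ s := fun w hw => hw.1
  have hFcomp : IsCompact F := by
    have hclosed : IsClosed F :=
      hcomp.isClosed.inter (isClosed_eq l.continuous continuous_const)
    exact hcomp.of_isClosed_subset hclosed hFs
  have hFconv : Convex ℝ F := hexp.convex hconv
  -- kernel submodule
  set W : Submodule ℝ V := LinearMap.ker (l : V →ₗ[ℝ] ℝ) with hWdef
  have hker : Module.finrank ℝ W ≤ n := by
    have hne : W ≠ ⊤ := by
      intro htop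
      have : w₀ - y ∈ W := htop ▸ Submodule.mem_top
      have : l (w₀ - y) = 0 := this
      rw [map_sub] at this
      linarith
    have := Submodule.finrank_lt (K := ℝ) (V := V) hne
    omega
  have hsubF : ∀ w ∈ F, w - y ∈ W := by
    intro w hw
    show l (w - y) = 0
    rw [map_sub, hw.2, sub_self]
  have hFhull : F ⊆ convexHull ℝ (Set.extremePoints ℝ F) :=
    mink_transfer H W hker y F hFcomp hFconv hsubF
  have hsubE : Set.extremePoints ℝ F ⊆ Set.extremePoints ℝ s :=
    (hexp.isExtreme).extremePoints_subset_extremePoints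
  exact convexHull_mono hsubE (hFhull hyF)

lemma minkAux : ∀ n : ℕ, MinkStmt.{u} n := by
  intro n
  induction n with
  | zero =>
    intro V _ _ _ hrank s hcomp hconv x hx
    have : Subsingleton V := by
      rw [← Module.finrank_zero_iff (R := ℝ)]
      omega
    refine subset_convexHull ℝ _ ?_
    rw [mem_extremePoints]
    exact ⟨hx, fun x₁ _ x₂ _ _ => ⟨Subsingleton.elim _ _, Subsingleton.elim _ _⟩⟩
  | succ n IH =>
    intro V _ _ _ hrank s hcomp hconv x hx
    by_cases hspan : affineSpan ℝ s = ⊤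
    · by_cases hext : x ∈ Set.extremePoints ℝ s
      · exact subset_convexHull ℝ _ hext
      · -- x lies in the open segment between two other points
        rw [mem_extremePoints] at hext
        push_neg at hext
        obtain ⟨x₁, hx₁, x₂, hx₂, hseg, hne⟩ := hext hx
        obtain ⟨a, b, ha, hb, hab, habx⟩ := hseg
        set v : V := x₂ - x₁ with hv
        have hvne : v ≠ 0 := by
          intro h0
          have hxx : x₂ = x₁ := sub_eq_zero.1 h0
          have hxe : x = x₁ := by
            rw [← habx, hxx, ← add_smul, hab, one_smul]
          exact hne hxe.symm (hxx.trans hxe.symm)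
        set T : Set ℝ := {t : ℝ | x + t • v ∈ s} with hT
        have haT : a ∈ T := by
          show x + a • v ∈ s
          have : x + a • v = x₂ := by
            rw [← habx, hv, smul_sub,
              show a • x₁ + b • x₂ + (a • x₂ - a • x₁) = (a + b) • x₂ by rw [add_smul]; abel,
              hab, one_smul]
          rwa [this]
        have hbT : -b ∈ T := by
          show x + (-b) • v ∈ s
          have : x + (-b) • v = x₁ := by
            rw [← habx, hv, neg_smul, smul_sub,
              show a • x₁ + b • x₂ + -(b • x₂ - b • x₁) = (a + b) • x₁ by rw [add_smul]; abel,
              hab, one_smul]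
          rwa [this]
        have hTclosed : IsClosed T := by
          have : Continuous fun t : ℝ => x + t • v :=
            continuous_const.add (continuous_id.smul continuous_const)
          exact IsClosed.preimage this hcomp.isClosed
        have hTbdd : Bornology.IsBounded T := by
          obtain ⟨C, hC⟩ := isBounded_iff_forall_norm_le.1 hcomp.isBounded
          refine isBounded_iff_forall_norm_le.2 ⟨(C + ‖x‖) / ‖v‖, ?_⟩
          intro t htm
          have hvpos : 0 < ‖v‖ := norm_pos_iff.2 hvne
          rw [Real.norm_eq_abs, le_div_iff₀ hvpos]
          calc |t| * ‖v‖ = ‖t • v‖ := by rw [norm_smul, Real.norm_eq_abs]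
            _ = ‖(x + t • v) - x‖ := by rw [add_sub_cancel_left]
            _ ≤ ‖x + t • v‖ + ‖x‖ := norm_sub_le _ _
            _ ≤ C + ‖x‖ := by
                have := hC _ htm
                linarith
        have hTcomp : IsCompact T := Metric.isCompact_of_isClosed_isBounded hTclosed hTbdd
        have hTne : T.Nonempty := ⟨a, haT⟩
        set tp : ℝ := sSup T with htp
        set tm : ℝ := sInf T with htm
        have htpT : tp ∈ T := hTcomp.sSup_mem hTne
        have htmT : tm ∈ T := hTcomp.sInf_mem hTne
        have htple : a ≤ tp := le_csSup hTcomp.bddAbove haT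
        have htmle : tm ≤ -b := csInf_le hTcomp.bddBelow hbT
        have htppos : 0 < tp := lt_of_lt_of_le ha htple
        have htmneg : tm < 0 := lt_of_le_of_lt htmle (by linarith)
        set yp : V := x + tp • v with hyp
        set ym : V := x + tm • v with hym
        have hypext : yp ∈ convexHull ℝ (Set.extremePoints ℝ s) := by
          refine mink_endpoint IH s hcomp hconv hrank hspan htpT hvne ?_
          intro ε hε hmem
          have : yp + ε • v = x + (tp + ε) • v := by
            rw [hyp, add_smul]
            abel
          rw [this] at hmem
          have : tp + ε ≤ tp := le_csSup hTcomp.bddAbove hmem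
          linarith
        have hymext : ym ∈ convexHull ℝ (Set.extremePoints ℝ s) := by
          refine mink_endpoint IH s hcomp hconv hrank hspan htmT (neg_ne_zero.2 hvne) ?_
          intro ε hε hmem
          have : ym + ε • (-v) = x + (tm - ε) • v := by
            rw [hym, sub_smul, smul_neg]
            abel
          rw [this] at hmem
          have : tm ≤ tm - ε := csInf_le hTcomp.bddBelow hmem
          linarith
        -- x is a convex combination of ym and yp
        have hd : 0 < tp - tm := by linarith
        set cm : ℝ := tp / (tp - tm) with hcm
        set cp : ℝ := -tm / (tp - tm) with hcp
        have hcm0 : 0 ≤ cm := by positivity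
        have hcp0 : 0 ≤ cp := by
          apply div_nonneg <;> linarith
        have hcsum : cm + cp = 1 := by
          rw [hcm, hcp, ← add_div, show tp + -tm = tp - tm by ring, div_self hd.ne']
        have hcomb : cm • ym + cp • yp = x := by
          rw [hym, hyp, smul_add, smul_add, smul_smul, smul_smul]
          have h1 : cm • x + cp • x = x := by
            rw [← add_smul, hcsum, one_smul]
          have h2 : cm * tm + cp * tp = 0 := by
            rw [hcm, hcp]
            field_simp
            ring
          calc cm • x + (cm * tm) • v + (cp • x + (cp * tp) • v)
              = (cm • x + cp • x) + (cm * tm + cp * tp) • v := by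
                rw [add_smul]
                abel
            _ = x := by rw [h1, h2, zero_smul, add_zero]
        have := (convex_convexHull ℝ (Set.extremePoints ℝ s)) hymext hypext hcm0 hcp0 hcsum
        rwa [hcomb] at this
    · -- affine span is proper: transfer to the direction submodule
      have hsne : s.Nonempty := ⟨x, hx⟩
      set W : Submodule ℝ V := (affineSpan ℝ s).direction with hW
      have hWne : W ≠ ⊤ := by
        intro htop
        exact hspan ((AffineSubspace.direction_eq_top_iff_of_nonempty
          ((affineSpan_nonempty ℝ).2 hsne)).1 htop)
      have hWrank : Module.finrank ℝ W ≤ n := by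
        have := Submodule.finrank_lt (K := ℝ) (V := V) hWne
        omega
      have hsub : ∀ w ∈ s, w - x ∈ W := by
        intro w hw
        have := AffineSubspace.vsub_mem_direction
          (subset_affineSpan ℝ s hw) (subset_affineSpan ℝ s hx)
        rwa [vsub_eq_sub] at this
      exact mink_transfer IH W hWrank x s hcomp hconv hsub hx

/-- Minkowski's theorem: in finite dimensions every point of a compact convex set is
a convex combination of its extreme points. -/
theorem minkowski {V : Type u} [NormedAddCommGroup V] [NormedSpace ℝ V]
    [FiniteDimensional ℝ V] (s : Set V) (hcomp : IsCompact s) (hconv : Convex ℝ s) :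
    s ⊆ convexHull ℝ (Set.extremePoints ℝ s) :=
  minkAux (Module.finrank ℝ V) V le_rfl s hcomp hconv

/-- Decompose a point of a compact convex set into extreme points so that the
weighted `f`-sum is below `f` of the point (concave Jensen). -/
lemma decomp_extreme {V : Type u} [NormedAddCommGroup V] [NormedSpace ℝ V]
    [FiniteDimensional ℝ V] (Ω : Set V) (hΩc : IsCompact Ω) (hΩ : Convex ℝ Ω)
    (f : V → ℝ) (hf : ConcaveOn ℝ Ω f) (x : V) (hx : x ∈ Ω) :
    ∃ (l : ℕ) (q : Fin l → ℝ) (π : Fin l → V),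
      (∀ j, 0 < q j) ∧ (∑ j, q j = 1) ∧ (∀ j, π j ∈ Set.extremePoints ℝ Ω) ∧
      (∑ j, q j • π j = x) ∧ (∑ j, q j * f (π j) ≤ f x) := by
  classical
  have hmem := minkowski Ω hΩc hΩ hx
  rw [convexHull_eq] at hmem
  obtain ⟨ι, t, w, z, hw0, hw1, hz, hcm⟩ := hmem
  rw [Finset.centerMass_eq_of_sum_1 _ _ hw1] at hcm
  set t' : Finset ι := t.filter (fun i => w i ≠ 0) with ht'
  have ht'sub : t' ⊆ t := Finset.filter_subset _ _
  have hzero : ∀ i ∈ t, i ∉ t' → w i = 0 := by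
    intro i hi hni
    by_contra hne
    exact hni (Finset.mem_filter.2 ⟨hi, hne⟩)
  have hsum_w : ∑ i ∈ t', w i = 1 := by
    rw [← hw1]
    exact Finset.sum_subset ht'sub (fun i hi hni => hzero i hi hni)
  have hsum_z : ∑ i ∈ t', w i • z i = x := by
    rw [← hcm]
    exact Finset.sum_subset ht'sub
      (fun i hi hni => by rw [hzero i hi hni, zero_smul])
  have hsum_f : ∑ i ∈ t', w i * f (z i) = ∑ i ∈ t, w i * f (z i) :=
    Finset.sum_subset ht'sub (fun i hi hni => by rw [hzero i hi hni, zero_mul])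
  -- Jensen on t'
  have hjensen : ∑ i ∈ t', w i * f (z i) ≤ f x := by
    have := hf.le_map_sum (t := t') (w := w) (p := z)
      (fun i hi => hw0 i (ht'sub hi)) hsum_w (fun i hi => extremePoints_subset (hz i (ht'sub hi)))
    rw [hsum_z] at this
    simpa [smul_eq_mul] using this
  -- enumerate t'
  set m : ℕ := t'.card with hm
  set e : Fin m ≃ t' := t'.equivFin.symm with he
  refine ⟨m, fun j => w (e j), fun j => z (e j), ?_, ?_, ?_, ?_, ?_⟩
  · intro j
    have hjt : (e j : ι) ∈ t' := (e j).2
    have h0 : w (e j) ≠ 0 := (Finset.mem_filter.1 hjt).2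
    exact lt_of_le_of_ne (hw0 _ (ht'sub hjt)) (Ne.symm h0)
  · rw [show (∑ j, w (e j)) = ∑ i : t', w i from Equiv.sum_comp e (fun i : t' => w i),
      Finset.sum_coe_sort t' w]
    exact hsum_w
  · intro j
    have hjt : (e j : ι) ∈ t' := (e j).2
    have hex : z (e j) ∈ Set.extremePoints ℝ Ω := hz _ (ht'sub hjt)
    exact hex
  · rw [show (∑ j, w (e j) • z (e j)) = ∑ i : t', w i • z i from
      Equiv.sum_comp e (fun i : t' => w i • z i),
      Finset.sum_coe_sort t' (fun i => w i • z i)]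
    exact hsum_z
  · rw [show (∑ j, w (e j) * f (z (e j))) = ∑ i : t', w i * f (z i) from
      Equiv.sum_comp e (fun i : t' => w i * f (z i)),
      Finset.sum_coe_sort t' (fun i => w i * f (z i))]
    exact hjensen


/-- If f is concave (and continuous) on a compact convex Ω, then every convex
decomposition can be refined to a decomposition into extreme points with a weighted
f-sum that is at most the original; consequently the roof infimum over extreme-point
decompositions equals the infimum over all decompositions. -/
theorem stmt10
    {V : Type*} [NormedAddCommGroup V] [NormedSpace ℝ V] [FiniteDimensional ℝ V]
    (Ω : Set V) (hΩc : IsCompact Ω) (hΩ : Convex ℝ Ω)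
    (f : V → ℝ) (hfconc : ConcaveOn ℝ Ω f) (hfcont : ContinuousOn f Ω) :
    (∀ ω ∈ Ω, ∀ (k : ℕ) (p : Fin k → ℝ) (ωi : Fin k → V),
      (∀ i, 0 < p i) → (∑ i, p i = 1) → (∀ i, ωi i ∈ Ω) →
      (∑ i, p i • ωi i = ω) →
      ∃ (l : ℕ) (q : Fin l → ℝ) (π : Fin l → V),
        (∀ j, 0 < q j) ∧ (∑ j, q j = 1) ∧
        (∀ j, π j ∈ Set.extremePoints ℝ Ω) ∧
        (∑ j, q j • π j = ω) ∧
        (∑ j, q j * f (π j) ≤ ∑ i, p i * f (ωi i))) ∧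
    (∀ ω ∈ Ω,
      sInf {s : ℝ | ∃ (l : ℕ) (q : Fin l → ℝ) (π : Fin l → V),
        (∀ j, 0 < q j) ∧ (∑ j, q j = 1) ∧ (∀ j, π j ∈ Set.extremePoints ℝ Ω) ∧
        (∑ j, q j • π j = ω) ∧ s = ∑ j, q j * f (π j)}
      = sInf {s : ℝ | ∃ (k : ℕ) (p : Fin k → ℝ) (ωi : Fin k → V),
        (∀ i, 0 < p i) ∧ (∑ i, p i = 1) ∧ (∀ i, ωi i ∈ Ω) ∧
        (∑ i, p i • ωi i = ω) ∧ s = ∑ i, p i * f (ωi i)}) := by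
  classical
  have part1 : ∀ ω ∈ Ω, ∀ (k : ℕ) (p : Fin k → ℝ) (ωi : Fin k → V),
      (∀ i, 0 < p i) → (∑ i, p i = 1) → (∀ i, ωi i ∈ Ω) →
      (∑ i, p i • ωi i = ω) →
      ∃ (l : ℕ) (q : Fin l → ℝ) (π : Fin l → V),
        (∀ j, 0 < q j) ∧ (∑ j, q j = 1) ∧
        (∀ j, π j ∈ Set.extremePoints ℝ Ω) ∧
        (∑ j, q j • π j = ω) ∧
        (∑ j, q j * f (π j) ≤ ∑ i, p i * f (ωi i)) := by
    intro ω hω k p ωi hp hpsum hmem heq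
    choose l q π hq hqsum hπ hπsum hle using
      fun i => decomp_extreme Ω hΩc hΩ f hfconc (ωi i) (hmem i)
    set ι := (i : Fin k) × Fin (l i) with hι
    set N : ℕ := Fintype.card ι with hN
    set e : Fin N ≃ ι := (Fintype.equivFin ι).symm with he
    refine ⟨N, fun j => p (e j).1 * q (e j).1 (e j).2, fun j => π (e j).1 (e j).2,
      ?_, ?_, ?_, ?_, ?_⟩
    · intro j
      exact mul_pos (hp _) (hq _ _)
    · rw [Equiv.sum_comp e (fun i : ι => p i.1 * q i.1 i.2), ← Finset.univ_sigma_univ, Finset.sum_sigma]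
      calc (∑ i, ∑ j, p i * q i j) = ∑ i, p i * ∑ j, q i j := by
            simp_rw [Finset.mul_sum]
        _ = ∑ i, p i := by simp_rw [hqsum, mul_one]
        _ = 1 := hpsum
    · intro j
      exact hπ _ _
    · rw [Equiv.sum_comp e (fun i : ι => (p i.1 * q i.1 i.2) • π i.1 i.2), ← Finset.univ_sigma_univ, Finset.sum_sigma]
      calc (∑ i, ∑ j, (p i * q i j) • π i j) = ∑ i, p i • ∑ j, q i j • π i j := by
            simp_rw [Finset.smul_sum, mul_smul]
        _ = ∑ i, p i • ωi i := by simp_rw [hπsum]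
        _ = ω := heq
    · rw [Equiv.sum_comp e (fun i : ι => (p i.1 * q i.1 i.2) * f (π i.1 i.2)),
        ← Finset.univ_sigma_univ, Finset.sum_sigma]
      calc (∑ i, ∑ j, p i * q i j * f (π i j)) = ∑ i, p i * ∑ j, q i j * f (π i j) := by
            simp_rw [Finset.mul_sum, mul_assoc]
        _ ≤ ∑ i, p i * f (ωi i) :=
            Finset.sum_le_sum fun i _ => mul_le_mul_of_nonneg_left (hle i) (hp i).le
  refine ⟨part1, ?_⟩
  intro ω hω
  set Sext := {s : ℝ | ∃ (l : ℕ) (q : Fin l → ℝ) (π : Fin l → V),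
      (∀ j, 0 < q j) ∧ (∑ j, q j = 1) ∧ (∀ j, π j ∈ Set.extremePoints ℝ Ω) ∧
      (∑ j, q j • π j = ω) ∧ s = ∑ j, q j * f (π j)} with hSext
  set Sall := {s : ℝ | ∃ (k : ℕ) (p : Fin k → ℝ) (ωi : Fin k → V),
      (∀ i, 0 < p i) ∧ (∑ i, p i = 1) ∧ (∀ i, ωi i ∈ Ω) ∧
      (∑ i, p i • ωi i = ω) ∧ s = ∑ i, p i * f (ωi i)} with hSall
  have hsub : Sext ⊆ Sall := by
    rintro s ⟨lngth, q, π, hq, hqsum, hπ, hπsum, rfl⟩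
    exact ⟨lngth, q, π, hq, hqsum, fun j => extremePoints_subset (hπ j), hπsum, rfl⟩
  -- a trivial decomposition of ω
  have htrivial : (∀ i : Fin 1, (0:ℝ) < 1) ∧ True := ⟨fun _ => one_pos, trivial⟩
  obtain ⟨l₀, q₀, π₀, hq₀, hq₀sum, hπ₀, hπ₀sum, hle₀⟩ :=
    part1 ω hω 1 (fun _ => (1:ℝ)) (fun _ => ω) (fun _ => one_pos) (by simp)
      (fun _ => hω) (by simp)
  have hSextne : Sext.Nonempty := ⟨∑ j, q₀ j * f (π₀ j), l₀, q₀, π₀, hq₀, hq₀sum, hπ₀, hπ₀sum, rfl⟩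
  have hSallne : Sall.Nonempty := hSextne.mono hsub
  -- lower bound
  obtain ⟨xmin, hxmin, hminOn⟩ := hΩc.exists_isMinOn ⟨ω, hω⟩ hfcont
  have hmin : ∀ y ∈ Ω, f xmin ≤ f y := fun y hy => hminOn hy
  have hbddall : f xmin ∈ lowerBounds Sall := by
    rintro s ⟨k, p, ωi, hp, hpsum, hmem, hsum, rfl⟩
    calc f xmin = ∑ i, p i * f xmin := by
          rw [← Finset.sum_mul, hpsum, one_mul]
      _ ≤ ∑ i, p i * f (ωi i) :=
          Finset.sum_le_sum fun i _ => mul_le_mul_of_nonneg_left (hmin _ (hmem i)) (hp i).le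
  have hbddallB : BddBelow Sall := ⟨f xmin, hbddall⟩
  have hbddextB : BddBelow Sext := hbddallB.mono hsub
  apply le_antisymm
  · refine le_csInf hSallne ?_
    rintro s ⟨k, p, ωi, hp, hpsum, hmem, hsum, rfl⟩
    obtain ⟨lngth, q, π, hq, hqsum, hπ, hπsum, hle⟩ :=
      part1 ω hω k p ωi hp hpsum hmem hsum
    calc sInf Sext ≤ ∑ j, q j * f (π j) :=
          csInf_le hbddextB ⟨lngth, q, π, hq, hqsum, hπ, hπsum, rfl⟩
      _ ≤ ∑ i, p i * f (ωi i) := hle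
  · exact csInf_le_csInf hbddallB hSextne hsub
end
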